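/- For integers 0 ≤ i, j < n-1 with i ≠ j, one has i ≺ j in P(λ) if and only if i < j and for every t ∈ {1, …, d}: (s_{t,i} + s_{t,j-i} - s_{t,j})/(n-1) = ⌈ s_{t,i}/(n-1) ⌉ + ⌈ s_{t,j-i}/(n-1) ⌉ - ⌈ s_{t,j}/(n-1) ⌉. -/
import Mathlib


/-- The lattice point `p(b)` of the fundamental parallelepiped `Π_λ`:
`p(b) = ((Σ_t ⌈bλ_t/(n-1)⌉) - b, ⌈bλ_1/(n-1)⌉, …, ⌈bλ_d/(n-1)⌉) ∈ ℤ^{d+1}`. -/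
def pfun (d n : ℕ) (lam : Fin d → ℕ) (b : ℤ) : Fin (d + 1) → ℤ :=
  Fin.cons ((∑ t, ⌈(b * lam t : ℚ) / ((n : ℚ) - 1)⌉) - b)
    (fun t => ⌈(b * lam t : ℚ) / ((n : ℚ) - 1)⌉)

/-- The relation `i ≺ j` of the fundamental parallelepiped poset `P(λ)` on `{0, …, n-2}`:
`i ≺ j` iff there exists `0 < ℓ < n-1` with `p(i) + p(ℓ) = p(j)`. -/
def precRel (d n : ℕ) (lam : Fin d → ℕ) (i j : ℤ) : Prop :=
  ∃ l : ℤ, 0 < l ∧ l < (n : ℤ) - 1 ∧ pfun d n lam i + pfun d n lam l = pfun d n lam j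

lemma ceil_div_split (m x : ℤ) (hm : 0 < m) :
    ⌈(x : ℚ) / (m : ℚ)⌉ = x / m + ⌈((x % m : ℤ) : ℚ) / (m : ℚ)⌉ := by
  have hm' : (m : ℚ) ≠ 0 := by exact_mod_cast hm.ne'
  conv_lhs => rw [← Int.mul_ediv_add_emod x m]
  push_cast
  rw [add_div, mul_div_cancel_left₀ _ hm', add_comm ((x / m : ℤ) : ℚ), Int.ceil_add_intCast]
  ring

lemma per_t (m : ℤ) (hm : 0 < m) (xi xl xj : ℤ) (hx : xi + xl = xj) :
    (⌈(xi : ℚ) / (m : ℚ)⌉ + ⌈(xl : ℚ) / (m : ℚ)⌉ = ⌈(xj : ℚ) / (m : ℚ)⌉) ↔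
      ((xi % m + xl % m - xj % m : ℤ) : ℚ) / (m : ℚ)
        = ((⌈((xi % m : ℤ) : ℚ) / (m : ℚ)⌉ + ⌈((xl % m : ℤ) : ℚ) / (m : ℚ)⌉
            - ⌈((xj % m : ℤ) : ℚ) / (m : ℚ)⌉ : ℤ) : ℚ) := by
  have hm' : (m : ℚ) ≠ 0 := by exact_mod_cast hm.ne'
  have ei := Int.mul_ediv_add_emod xi m
  have el := Int.mul_ediv_add_emod xl m
  have ej := Int.mul_ediv_add_emod xj m
  have hsd : xi % m + xl % m - xj % m = m * (xj / m - xi / m - xl / m) := by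
    linear_combination ei + el - ej + hx
  rw [ceil_div_split m xi hm, ceil_div_split m xl hm, ceil_div_split m xj hm]
  constructor
  · intro h
    have hc : ⌈((xi % m : ℤ) : ℚ) / (m : ℚ)⌉ + ⌈((xl % m : ℤ) : ℚ) / (m : ℚ)⌉
        - ⌈((xj % m : ℤ) : ℚ) / (m : ℚ)⌉ = xj / m - xi / m - xl / m := by omega
    rw [div_eq_iff hm']
    have : xi % m + xl % m - xj % m
        = (⌈((xi % m : ℤ) : ℚ) / (m : ℚ)⌉ + ⌈((xl % m : ℤ) : ℚ) / (m : ℚ)⌉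
            - ⌈((xj % m : ℤ) : ℚ) / (m : ℚ)⌉) * m := by rw [hc]; linarith [hsd]
    exact_mod_cast this
  · intro h
    rw [div_eq_iff hm'] at h
    have h' : xi % m + xl % m - xj % m
        = (⌈((xi % m : ℤ) : ℚ) / (m : ℚ)⌉ + ⌈((xl % m : ℤ) : ℚ) / (m : ℚ)⌉
            - ⌈((xj % m : ℤ) : ℚ) / (m : ℚ)⌉) * m := by exact_mod_cast h
    have hmm : m * (xj / m - xi / m - xl / m)
        = m * (⌈((xi % m : ℤ) : ℚ) / (m : ℚ)⌉ + ⌈((xl % m : ℤ) : ℚ) / (m : ℚ)⌉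
            - ⌈((xj % m : ℤ) : ℚ) / (m : ℚ)⌉) := by linarith [hsd, h']
    have := mul_left_cancel₀ hm.ne' hmm
    omega

/-- For integers `0 ≤ i, j < n-1` with `i ≠ j`, one has `i ≺ j` in `P(λ)` iff
`i < j` and for every `t`:
`(s_{t,i} + s_{t,j-i} - s_{t,j})/(n-1) = ⌈s_{t,i}/(n-1)⌉ + ⌈s_{t,j-i}/(n-1)⌉ - ⌈s_{t,j}/(n-1)⌉`,
where `s_{t,b}` is the remainder of `b·λ_t` upon division by `n-1`. -/
theorem stmt_5 (d n : ℕ) (hd : 1 ≤ d) (hn : 3 ≤ n) (lam : Fin d → ℕ)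
    (hpos : ∀ t, 0 < lam t) (hsum : ∑ t, lam t = n)
    (s : Fin d → ℤ → ℤ) (hs : ∀ t b, s t b = (b * lam t) % ((n : ℤ) - 1))
    (i j : ℤ) (hi0 : 0 ≤ i) (hi1 : i < (n : ℤ) - 1)
    (hj0 : 0 ≤ j) (hj1 : j < (n : ℤ) - 1) (hij : i ≠ j) :
    precRel d n lam i j ↔
      i < j ∧ ∀ t : Fin d,
        ((s t i + s t (j - i) - s t j : ℤ) : ℚ) / ((n : ℚ) - 1) =
          ((⌈(s t i : ℚ) / ((n : ℚ) - 1)⌉ + ⌈(s t (j - i) : ℚ) / ((n : ℚ) - 1)⌉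
            - ⌈(s t j : ℚ) / ((n : ℚ) - 1)⌉ : ℤ) : ℚ) := by
  have hm : (0 : ℤ) < (n : ℤ) - 1 := by
    have : (3 : ℤ) ≤ (n : ℤ) := by exact_mod_cast hn
    omega
  set m : ℤ := (n : ℤ) - 1 with hmdef
  have hmQ : ((n : ℚ) - 1) = ((m : ℤ) : ℚ) := by rw [hmdef]; push_cast; ring
  -- the key per-coordinate equivalence with l = j - i
  have keyt : ∀ t : Fin d,
      (⌈(i * lam t : ℚ) / ((n : ℚ) - 1)⌉ + ⌈(((j - i : ℤ) : ℚ) * (lam t : ℚ)) / ((n : ℚ) - 1)⌉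
        = ⌈(j * lam t : ℚ) / ((n : ℚ) - 1)⌉) ↔
      (((s t i + s t (j - i) - s t j : ℤ) : ℚ) / ((n : ℚ) - 1) =
        ((⌈(s t i : ℚ) / ((n : ℚ) - 1)⌉ + ⌈(s t (j - i) : ℚ) / ((n : ℚ) - 1)⌉
          - ⌈(s t j : ℚ) / ((n : ℚ) - 1)⌉ : ℤ) : ℚ)) := by
    intro t
    have H := per_t m hm (i * (lam t : ℤ)) ((j - i) * (lam t : ℤ)) (j * (lam t : ℤ)) (by ring)
    rw [← hs t i, ← hs t (j - i), ← hs t j] at H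
    simp only [hmQ]
    push_cast at H ⊢
    exact H
  constructor
  · rintro ⟨l, hl0, hlm, heq⟩
    have hsucc : ∀ t : Fin d,
        ⌈(i * lam t : ℚ) / ((n : ℚ) - 1)⌉ + ⌈(l * lam t : ℚ) / ((n : ℚ) - 1)⌉
          = ⌈(j * lam t : ℚ) / ((n : ℚ) - 1)⌉ := by
      intro t
      have := congrFun heq t.succ
      simpa [pfun, Fin.cons_succ] using this
    have h0 := congrFun heq 0
    simp only [pfun, Pi.add_apply, Fin.cons_zero] at h0
    have hsum' : (∑ t, ⌈(i * lam t : ℚ) / ((n : ℚ) - 1)⌉)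
        + (∑ t, ⌈(l * lam t : ℚ) / ((n : ℚ) - 1)⌉)
        = ∑ t, ⌈(j * lam t : ℚ) / ((n : ℚ) - 1)⌉ := by
      rw [← Finset.sum_add_distrib]
      exact Finset.sum_congr rfl fun t _ => hsucc t
    have hl : l = j - i := by omega
    subst hl
    refine ⟨by omega, fun t => (keyt t).mp (hsucc t)⟩
  · rintro ⟨hlt, hcond⟩
    refine ⟨j - i, by omega, by omega, ?_⟩
    have hC : ∀ t : Fin d,
        ⌈(i * lam t : ℚ) / ((n : ℚ) - 1)⌉ + ⌈(((j - i : ℤ) : ℚ) * (lam t : ℚ)) / ((n : ℚ) - 1)⌉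
          = ⌈(j * lam t : ℚ) / ((n : ℚ) - 1)⌉ := fun t => (keyt t).mpr (hcond t)
    funext k
    refine Fin.cases ?_ ?_ k
    · simp only [pfun, Pi.add_apply, Fin.cons_zero]
      have : (∑ t, ⌈(i * lam t : ℚ) / ((n : ℚ) - 1)⌉)
          + (∑ t, ⌈(((j - i : ℤ) : ℚ) * (lam t : ℚ)) / ((n : ℚ) - 1)⌉)
          = ∑ t, ⌈(j * lam t : ℚ) / ((n : ℚ) - 1)⌉ := by
        rw [← Finset.sum_add_distrib]
        exact Finset.sum_congr rfl fun t _ => hC t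
      omega
    · intro t
      simp only [pfun, Pi.add_apply, Fin.cons_succ]
      exact hC t
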